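/- Let X : Ω → ℝ^m and V : Ω → ℝ^t be jointly centered Gaussian with block covariance Σ = [[Σ_xx, Σ_xv],[Σ_xvᵀ, Σ_vv]], Σ_vv positive definite, and let S ⊆ ℝ^t be measurable with P(V ∈ S) > 0. Write A = Σ_xv Σ_vv⁻¹ and Σ_sch = Σ_xx − A Σ_xvᵀ, fix indices i, j, and suppose s² := (Σ_sch)_{ii} + (Σ_sch)_{jj} − 2 (Σ_sch)_{ij} > 0. Then P(X_i ≤ X_j | V ∈ S) = E[ Φ( ((A V)_j − (A V)_i) / s ) | V ∈ S ], where Φ is the standard normal cumulative distribution function and E[· | V ∈ S] is the expectation under the conditioned measure P(· | V ∈ S). -/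

import Mathlib

open MeasureTheory ProbabilityTheory Matrix
open scoped ProbabilityTheory ENNReal NNReal Real

/-- The standard Gaussian measure on `ℝ^n`. -/
noncomputable def stdGaussianPi (n : ℕ) : Measure (Fin n → ℝ) :=
  Measure.pi fun _ => gaussianReal 0 1

open scoped Classical in
/-- The multivariate Gaussian measure `N(μ, S)` on `ℝ^n`, defined as the pushforward of the
standard Gaussian under `x ↦ μ + √S x` when `S` is positive semidefinite. -/
noncomputable def multivariateGaussian {n : ℕ} (μ : Fin n → ℝ)
    (S : Matrix (Fin n) (Fin n) ℝ) : Measure (Fin n → ℝ) :=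
  if hS : S.PosSemidef then (stdGaussianPi n).map (fun x => μ +
    ((hS.1.eigenvectorUnitary : Matrix (Fin n) (Fin n) ℝ) *
      diagonal ((RCLike.ofReal : ℝ → ℝ) ∘ (√·) ∘ hS.1.eigenvalues) *
      (star (hS.1.eigenvectorUnitary : Matrix (Fin n) (Fin n) ℝ))).mulVec x) else 0

/-- The block matrix `[[Sxx, Sxv], [Sxvᵀ, Svv]]` as a matrix on `Fin (m + t)`. -/
noncomputable def blockCov {m t : ℕ} (Sxx : Matrix (Fin m) (Fin m) ℝ)
    (Sxv : Matrix (Fin m) (Fin t) ℝ) (Svv : Matrix (Fin t) (Fin t) ℝ) :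
    Matrix (Fin (m + t)) (Fin (m + t)) ℝ :=
  Matrix.reindex finSumFinEquiv finSumFinEquiv (Matrix.fromBlocks Sxx Sxv Sxvᵀ Svv)

/-- The cumulative distribution function of the standard normal distribution. -/
noncomputable def stdNormalCDF (x : ℝ) : ℝ := (gaussianReal 0 1 (Set.Iic x)).toReal

lemma measurable_mulVec' {a b : ℕ} (M : Matrix (Fin a) (Fin b) ℝ) :
    Measurable (fun x : Fin b → ℝ => M *ᵥ x) := by
  apply measurable_pi_iff.2
  intro k
  simp only [Matrix.mulVec, dotProduct]
  exact Finset.measurable_sum _ fun j _ => (measurable_pi_apply j).const_mul _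

lemma measurable_dotProduct' {b : ℕ} (u : Fin b → ℝ) :
    Measurable (fun x : Fin b → ℝ => u ⬝ᵥ x) := by
  simp only [dotProduct]
  exact Finset.measurable_sum _ fun j _ => (measurable_pi_apply j).const_mul _

lemma lintegral_pi_prod {n : ℕ} (μ : Measure ℝ) [SigmaFinite μ] (g : Fin n → ℝ → ℝ≥0∞)
    (hg : ∀ i, Measurable (g i)) :
    ∫⁻ x, ∏ i, g i (x i) ∂(Measure.pi fun _ : Fin n => μ) = ∏ i, ∫⁻ t, g i t ∂μ := by
  induction n with
  | zero =>
      simp only [Finset.univ_eq_empty, Finset.prod_empty, lintegral_one]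
      rw [Measure.pi_univ]
      simp
  | succ n ih =>
      have hmp := measurePreserving_piFinSuccAbove (fun _ : Fin (n + 1) => μ) 0
      have hG : Measurable (fun p : ℝ × (Fin n → ℝ) =>
          g 0 p.1 * ∏ i, g i.succ (p.2 i)) := by
        exact ((hg 0).comp measurable_fst).mul
          (Finset.measurable_prod _ fun i _ => (hg i.succ).comp
            ((measurable_pi_apply i).comp measurable_snd))
      have h1 : ∫⁻ x, ∏ i, g i (x i) ∂(Measure.pi fun _ : Fin (n + 1) => μ)
          = ∫⁻ p, g 0 p.1 * ∏ i, g i.succ (p.2 i)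
              ∂((μ : Measure ℝ).prod (Measure.pi fun _ : Fin n => μ)) := by
        rw [← hmp.lintegral_comp hG]
        refine lintegral_congr fun x => ?_
        simp [MeasurableEquiv.piFinSuccAbove, Fin.prod_univ_succ, Fin.zero_succAbove, Fin.tail]
      rw [h1, lintegral_prod_mul (f := g 0) (g := fun y : Fin n → ℝ => ∏ i, g i.succ (y i))
        (hg 0).aemeasurable
        (Finset.measurable_prod _ fun i _ => (hg i.succ).comp (measurable_pi_apply i)).aemeasurable,
        ih (fun i => g i.succ) (fun i => hg i.succ), Fin.prod_univ_succ]

lemma stdGaussianPi_eq_withDensity (n : ℕ) :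
    stdGaussianPi n = (volume : Measure (Fin n → ℝ)).withDensity
      (fun x => ∏ i, gaussianPDF 0 1 (x i)) := by
  rw [stdGaussianPi]
  refine Measure.pi_eq fun s hs => ?_
  have hbox : MeasurableSet (Set.univ.pi s) := MeasurableSet.univ_pi hs
  rw [withDensity_apply _ hbox, ← lintegral_indicator hbox]
  have hpt : ∀ x : Fin n → ℝ, (Set.univ.pi s).indicator
      (fun x => ∏ i, gaussianPDF 0 1 (x i)) x
      = ∏ i, (s i).indicator (gaussianPDF 0 1) (x i) := by
    intro x
    by_cases hx : x ∈ Set.univ.pi s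
    · rw [Set.indicator_of_mem hx]
      refine Finset.prod_congr rfl fun i _ => ?_
      rw [Set.indicator_of_mem (hx i (Set.mem_univ i))]
    · rw [Set.indicator_of_notMem hx]
      have : ∃ i, x i ∉ s i := by
        by_contra hall
        push_neg at hall
        exact hx fun i _ => hall i
      obtain ⟨i, hi⟩ := this
      exact (Finset.prod_eq_zero (Finset.mem_univ i)
        (by rw [Set.indicator_of_notMem hi])).symm
  calc ∫⁻ x, (Set.univ.pi s).indicator (fun x => ∏ i, gaussianPDF 0 1 (x i)) x
      = ∫⁻ x, ∏ i, (s i).indicator (gaussianPDF 0 1) (x i) ∂(volume : Measure (Fin n → ℝ)) :=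
        lintegral_congr hpt
    _ = ∏ i, ∫⁻ t, (s i).indicator (gaussianPDF 0 1) t ∂(volume : Measure ℝ) := by
        rw [volume_pi]
        exact lintegral_pi_prod _ _ fun i => (measurable_gaussianPDF 0 1).indicator (hs i)
    _ = ∏ i, gaussianReal 0 1 (s i) := by
        refine Finset.prod_congr rfl fun i _ => ?_
        rw [lintegral_indicator (hs i), ← gaussianReal_apply 0 one_ne_zero]

lemma withDensity_map_equiv {α β : Type*} [MeasurableSpace α] [MeasurableSpace β]
    (μ : Measure α) (T : α ≃ᵐ β) {ρ : α → ℝ≥0∞} (hρ : Measurable ρ) :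
    (μ.withDensity ρ).map T = (μ.map T).withDensity (fun y => ρ (T.symm y)) := by
  ext s hs
  rw [Measure.map_apply T.measurable hs, withDensity_apply _ (T.measurable hs),
    withDensity_apply _ hs,
    setLIntegral_map (f := fun y => ρ (T.symm y)) hs (hρ.comp T.symm.measurable) T.measurable]
  refine lintegral_congr fun x => ?_
  simp

lemma sum_sq_mulVec {n : ℕ} (Q : Matrix (Fin n) (Fin n) ℝ) (hQ' : Q * Qᵀ = 1)
    (y : Fin n → ℝ) : ∑ i, (Qᵀ *ᵥ y) i ^ 2 = ∑ i, y i ^ 2 := by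
  have h1 : ∀ z : Fin n → ℝ, ∑ i, z i ^ 2 = z ⬝ᵥ z := by
    intro z; simp [dotProduct, sq]
  rw [h1, h1, dotProduct_mulVec]
  have h2 : (Qᵀ *ᵥ y) ᵥ* Qᵀ = y := by
    rw [← mulVec_transpose, transpose_transpose, mulVec_mulVec, hQ', one_mulVec]
  rw [h2]

lemma stdGaussianPi_map_mulVec {n : ℕ} (Q : Matrix (Fin n) (Fin n) ℝ) (hQ : Qᵀ * Q = 1) :
    (stdGaussianPi n).map (Q.mulVec) = stdGaussianPi n := by
  have hQ' : Q * Qᵀ = 1 := mul_eq_one_comm.mp hQ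
  set T : (Fin n → ℝ) ≃ᵐ (Fin n → ℝ) :=
    { toFun := Q.mulVec
      invFun := Qᵀ.mulVec
      left_inv := fun x => by rw [mulVec_mulVec, hQ, one_mulVec]
      right_inv := fun x => by rw [mulVec_mulVec, hQ', one_mulVec]
      measurable_toFun := measurable_mulVec' Q
      measurable_invFun := measurable_mulVec' Qᵀ } with hT
  have hdet2 : Q.det * Q.det = 1 := by
    have := congrArg Matrix.det hQ'
    rwa [Matrix.det_mul, Matrix.det_transpose, Matrix.det_one] at this
  have hdet : Q.det ≠ 0 := by
    intro h; rw [h, mul_zero] at hdet2; exact zero_ne_one hdet2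
  have hvol : (volume : Measure (Fin n → ℝ)).map (Q.mulVec) = volume := by
    have hfun : ⇑(Matrix.toLin' Q) = Q.mulVec := by
      funext x; exact Matrix.toLin'_apply Q x
    have hd : LinearMap.det (Matrix.toLin' Q) ≠ 0 := by
      rwa [LinearMap.det_toLin']
    have := Real.map_linearMap_volume_pi_eq_smul_volume_pi hd
    rw [hfun] at this
    rw [this, LinearMap.det_toLin']
    have habs : |Q.det⁻¹| = 1 := by
      rcases mul_self_eq_one_iff.mp hdet2 with h | h <;> rw [h] <;> norm_num
    rw [habs, ENNReal.ofReal_one, one_smul]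
  have hρmeas : Measurable (fun x : Fin n → ℝ => ∏ i, gaussianPDF 0 1 (x i)) :=
    Finset.measurable_prod _ fun i _ => (measurable_gaussianPDF 0 1).comp (measurable_pi_apply i)
  have hmapT : (stdGaussianPi n).map (⇑T) = stdGaussianPi n := by
    rw [stdGaussianPi_eq_withDensity, withDensity_map_equiv _ T hρmeas]
    have hmv : (volume : Measure (Fin n → ℝ)).map (⇑T) = volume := hvol
    rw [hmv]
    congr 1
    funext y
    have hsymm : T.symm y = Qᵀ *ᵥ y := rfl
    rw [hsymm]
    have hpdf : ∀ z : Fin n → ℝ, ∏ i, gaussianPDF 0 1 (z i)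
        = ENNReal.ofReal ((Real.sqrt (2 * Real.pi * 1))⁻¹ ^ n * Real.exp (-(∑ i, z i ^ 2) / 2)) := by
      intro z
      simp only [gaussianPDF_def]
      rw [← ENNReal.ofReal_prod_of_nonneg (fun i _ => gaussianPDFReal_nonneg 0 1 (z i))]
      · congr 1
        simp only [ProbabilityTheory.gaussianPDFReal, NNReal.coe_one, sub_zero]
        rw [Finset.prod_mul_distrib, Finset.prod_const, ← Real.exp_sum]
        congr 1
        · simp [Finset.card_univ]
        · simp only [mul_one]
          rw [← Finset.sum_div, Finset.sum_neg_distrib]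
    rw [hpdf, hpdf, sum_sq_mulVec Q hQ']
  exact hmapT

instance stdGaussianPi_prob (n : ℕ) : IsProbabilityMeasure (stdGaussianPi n) := by
  rw [stdGaussianPi]; infer_instance

lemma stdGaussianPi_map_pair {n t : ℕ} (u : Fin n → ℝ) (hu : 0 < u ⬝ᵥ u)
    (N : Matrix (Fin t) (Fin n) ℝ) (hN : N *ᵥ u = 0) :
    (stdGaussianPi n).map (fun x => (u ⬝ᵥ x, N *ᵥ x)) =
      (gaussianReal 0 ⟨u ⬝ᵥ u, hu.le⟩).prod ((stdGaussianPi n).map (N.mulVec)) := by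
  obtain ⟨n', rfl⟩ : ∃ n', n = n' + 1 := by
    cases n with
    | zero => exact absurd hu (by simp [dotProduct])
    | succ k => exact ⟨k, rfl⟩
  set s : ℝ := Real.sqrt (u ⬝ᵥ u) with hs_def
  have hs : 0 < s := Real.sqrt_pos.mpr hu
  have hs2 : s ^ 2 = u ⬝ᵥ u := Real.sq_sqrt hu.le
  set uhat : EuclideanSpace ℝ (Fin (n' + 1)) := WithLp.toLp 2 (fun l => s⁻¹ * u l) with huhat
  have hinner : (inner ℝ uhat uhat : ℝ) = 1 := by
    simp only [PiLp.inner_apply, RCLike.inner_apply, starRingEnd_apply, star_trivial, huhat]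
    have : ∑ l, s⁻¹ * u l * (s⁻¹ * u l) = s⁻¹ * s⁻¹ * (u ⬝ᵥ u) := by
      rw [dotProduct, Finset.mul_sum]
      exact Finset.sum_congr rfl fun l _ => by ring
    rw [this, ← hs2]
    field_simp
  have hON : Orthonormal ℝ (({(0 : Fin (n' + 1))} : Set (Fin (n' + 1))).restrict
      (fun _ : Fin (n' + 1) => uhat)) := by
    rw [orthonormal_iff_ite]
    intro i j
    have hij : i = j := Subtype.ext (i.2.trans j.2.symm)
    subst hij
    rw [if_pos rfl]
    exact hinner
  obtain ⟨b, hb⟩ := hON.exists_orthonormalBasis_extension_of_card_eq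
    (by rw [finrank_euclideanSpace_fin, Fintype.card_fin])
  have hb0 : b 0 = uhat := hb 0 rfl
  set Q : Matrix (Fin (n' + 1)) (Fin (n' + 1)) ℝ := fun k l => b k l with hQdef
  have hbi : ∀ k k', ∑ l, b k l * b k' l = if k = k' then (1:ℝ) else 0 := by
    intro k k'
    have := (orthonormal_iff_ite (𝕜 := ℝ)).mp b.orthonormal k k'
    simpa [PiLp.inner_apply, RCLike.inner_apply, starRingEnd_apply, star_trivial, mul_comm] using this
  have hQQt : Q * Qᵀ = 1 := by
    ext k k'
    rw [Matrix.mul_apply, Matrix.one_apply]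
    exact hbi k k'
  have hQtQ : Qᵀ * Q = 1 := mul_eq_one_comm.mp hQQt
  have hrot : (stdGaussianPi (n' + 1)).map (Qᵀ.mulVec) = stdGaussianPi (n' + 1) :=
    stdGaussianPi_map_mulVec Qᵀ (by rwa [transpose_transpose])
  set f : (Fin (n' + 1) → ℝ) → ℝ × (Fin t → ℝ) := fun x => (u ⬝ᵥ x, N *ᵥ x) with hf_def
  have hf : Measurable f := (measurable_dotProduct' u).prodMk (measurable_mulVec' N)
  have hu_eq : ∀ l, u l = s * uhat l := by
    intro l
    rw [huhat]
    field_simp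
  have hQu : Q *ᵥ u = fun k => if k = 0 then s else 0 := by
    funext k
    rw [Matrix.mulVec, dotProduct]
    calc ∑ l, Q k l * u l = s * ∑ l, b k l * uhat l := by
          rw [Finset.mul_sum]
          exact Finset.sum_congr rfl fun l _ => by rw [hu_eq l, hQdef]; ring
      _ = s * (if k = 0 then 1 else 0) := by rw [← hb0, hbi k 0]
      _ = if k = 0 then s else 0 := by split <;> simp
  set N₁ : Matrix (Fin t) (Fin n') ℝ := (N * Qᵀ).submatrix id Fin.succ with hN₁
  have hPcol : ∀ k, (N * Qᵀ) k 0 = 0 := by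
    intro k
    rw [Matrix.mul_apply]
    have : ∑ l, N k l * Qᵀ l 0 = s⁻¹ * (N *ᵥ u) k := by
      rw [Matrix.mulVec, dotProduct, Finset.mul_sum]
      refine Finset.sum_congr rfl fun l _ => ?_
      have hb0l : (b 0 : EuclideanSpace ℝ (Fin (n' + 1))) l = s⁻¹ * u l := by rw [hb0]
      show N k l * b 0 l = s⁻¹ * (N k l * u l)
      rw [hb0l]
      ring
    rw [this, hN, Pi.zero_apply, mul_zero]
  have hcomp : f ∘ Qᵀ.mulVec = (Prod.map (fun a => s * a) (N₁.mulVec)) ∘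
      (fun y : Fin (n' + 1) → ℝ => (y 0, fun k : Fin n' => y k.succ)) := by
    funext y
    refine Prod.ext ?_ ?_
    · show u ⬝ᵥ (Qᵀ *ᵥ y) = s * y 0
      rw [dotProduct_mulVec, ← mulVec_transpose Qᵀ u, transpose_transpose, hQu]
      rw [dotProduct]
      simp [ite_mul]
    · show N *ᵥ (Qᵀ *ᵥ y) = N₁ *ᵥ (fun k => y k.succ)
      rw [mulVec_mulVec]
      funext k
      rw [Matrix.mulVec, dotProduct, Fin.sum_univ_succ, hPcol k, zero_mul, zero_add]
      rw [Matrix.mulVec, dotProduct]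
      rfl
  set e : (Fin (n' + 1) → ℝ) → ℝ × (Fin n' → ℝ) :=
    fun y => (y 0, fun k : Fin n' => y k.succ) with he_def
  have he : ⇑(MeasurableEquiv.piFinSuccAbove (fun _ : Fin (n' + 1) => ℝ) 0) = e := by
    funext y
    simp [MeasurableEquiv.piFinSuccAbove, Fin.insertNthEquiv, Fin.zero_succAbove, he_def,
      Fin.removeNth, Fin.tail]
    rfl
  have hN₁m : Measurable (N₁.mulVec) := measurable_mulVec' N₁
  have hsm : Measurable (fun a : ℝ => s * a) := measurable_id.const_mul s
  have hmape : (stdGaussianPi (n' + 1)).map e =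
      (gaussianReal 0 1).prod (stdGaussianPi n') := by
    rw [← he]
    exact (measurePreserving_piFinSuccAbove (fun _ : Fin (n' + 1) => gaussianReal 0 1) 0).map_eq
  have hγ : (gaussianReal 0 1).map (fun a => s * a) = gaussianReal 0 ⟨u ⬝ᵥ u, hu.le⟩ := by
    rw [gaussianReal_map_const_mul s, mul_zero]
    congr 1
    ext
    simp [hs2]
    rfl
  have main : (stdGaussianPi (n' + 1)).map f =
      (gaussianReal 0 ⟨u ⬝ᵥ u, hu.le⟩).prod ((stdGaussianPi n').map (N₁.mulVec)) := by
    calc (stdGaussianPi (n' + 1)).map f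
        = ((stdGaussianPi (n' + 1)).map (Qᵀ.mulVec)).map f := by rw [hrot]
      _ = (stdGaussianPi (n' + 1)).map (f ∘ Qᵀ.mulVec) :=
          Measure.map_map hf (measurable_mulVec' Qᵀ)
      _ = (stdGaussianPi (n' + 1)).map ((Prod.map (fun a => s * a) (N₁.mulVec)) ∘ e) := by
          rw [hcomp]
      _ = ((stdGaussianPi (n' + 1)).map e).map (Prod.map (fun a => s * a) (N₁.mulVec)) :=
          (Measure.map_map (hsm.prodMap hN₁m) ((measurable_pi_apply 0).prodMk
            (measurable_pi_iff.2 fun k => measurable_pi_apply _))).symm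
      _ = ((gaussianReal 0 1).prod (stdGaussianPi n')).map
            (Prod.map (fun a => s * a) (N₁.mulVec)) := by rw [hmape]
      _ = ((gaussianReal 0 1).map (fun a => s * a)).prod
            ((stdGaussianPi n').map (N₁.mulVec)) :=
          (Measure.map_prod_map _ _ hsm hN₁m).symm
      _ = (gaussianReal 0 ⟨u ⬝ᵥ u, hu.le⟩).prod ((stdGaussianPi n').map (N₁.mulVec)) := by
          rw [hγ]
  have hν : (stdGaussianPi n').map (N₁.mulVec) = (stdGaussianPi (n' + 1)).map (N.mulVec) := by
    have h1 := congrArg (Measure.map (Prod.snd : ℝ × (Fin t → ℝ) → Fin t → ℝ)) main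
    rw [Measure.map_map measurable_snd hf, Measure.map_snd_prod] at h1
    have : (Prod.snd ∘ f) = N.mulVec := rfl
    have hg1 : (gaussianReal 0 ⟨u ⬝ᵥ u, hu.le⟩) Set.univ = 1 :=
      (instIsProbabilityMeasureGaussianReal 0 _).measure_univ
    rw [this, hg1, one_smul] at h1
    exact h1.symm
  rw [main, hν]

lemma measurable_stdNormalCDF : Measurable stdNormalCDF := by
  refine Monotone.measurable fun a b hab => ?_
  exact ENNReal.toReal_mono (measure_ne_top _ _)
    (measure_mono (Set.Iic_subset_Iic.2 hab))

/-- Duel-probability estimator: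
`P(X_i ≤ X_j | V ∈ S) = E[Φ(((A V)_j − (A V)_i)/s) | V ∈ S]` with
`s² = (Σ_sch)_{ii} + (Σ_sch)_{jj} − 2(Σ_sch)_{ij}`. -/
theorem cond_duel_prob_eq {Ω : Type*} [MeasurableSpace Ω] {m t : ℕ}
    (P : Measure Ω) [IsProbabilityMeasure P]
    (X : Ω → (Fin m → ℝ)) (V : Ω → (Fin t → ℝ))
    (hX : Measurable X) (hV : Measurable V)
    (Sxx : Matrix (Fin m) (Fin m) ℝ) (Sxv : Matrix (Fin m) (Fin t) ℝ)
    (Svv : Matrix (Fin t) (Fin t) ℝ) (hvv : Svv.PosDef)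
    (hjoint : P.map (fun ω => Fin.append (X ω) (V ω)) =
      _root_.multivariateGaussian 0 (blockCov Sxx Sxv Svv))
    (S : Set (Fin t → ℝ)) (hS : MeasurableSet S) (hpos : 0 < P (V ⁻¹' S))
    (i j : Fin m)
    (hs : 0 < (Sxx - Sxv * Svv⁻¹ * Sxvᵀ) i i + (Sxx - Sxv * Svv⁻¹ * Sxvᵀ) j j
      - 2 * (Sxx - Sxv * Svv⁻¹ * Sxvᵀ) i j) :
    ((P[|V ⁻¹' S]) {ω | X ω i ≤ X ω j}).toReal =
      ∫ ω, stdNormalCDF ((((Sxv * Svv⁻¹).mulVec (V ω)) j - ((Sxv * Svv⁻¹).mulVec (V ω)) i) /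
        Real.sqrt ((Sxx - Sxv * Svv⁻¹ * Sxvᵀ) i i + (Sxx - Sxv * Svv⁻¹ * Sxvᵀ) j j
          - 2 * (Sxx - Sxv * Svv⁻¹ * Sxvᵀ) i j)) ∂(P[|V ⁻¹' S]) := by
  classical
  set A : Matrix (Fin m) (Fin t) ℝ := Sxv * Svv⁻¹ with hA_def
  set G : Matrix (Fin m) (Fin m) ℝ := Sxx - Sxv * Svv⁻¹ * Sxvᵀ with hG_def
  set sv : ℝ := G i i + G j j - 2 * G i j with hsv_def
  set s : ℝ := Real.sqrt sv with hsR_def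
  have hspos : 0 < s := Real.sqrt_pos.mpr hs
  have hs2 : s ^ 2 = sv := Real.sq_sqrt hs.le
  -- measurability of the joint map
  have habm : Measurable (fun ω => Fin.append (X ω) (V ω)) := by
    apply measurable_pi_iff.2
    intro l
    refine Fin.addCases (fun k => ?_) (fun k => ?_) l
    · simp only [Fin.append_left]
      exact (measurable_pi_apply k).comp hX
    · simp only [Fin.append_right]
      exact (measurable_pi_apply k).comp hV
  set μ : Measure (Fin (m + t) → ℝ) := P.map (fun ω => Fin.append (X ω) (V ω)) with hμ_def
  have hμprob : IsProbabilityMeasure μ := Measure.isProbabilityMeasure_map habm.aemeasurable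
  -- positive semidefiniteness of the block covariance
  have hPSD : (blockCov Sxx Sxv Svv).PosSemidef := by
    by_contra h
    have h0 : μ = 0 := by
      rw [hjoint, _root_.multivariateGaussian, dif_neg h]
    have h1 := hμprob.measure_univ
    rw [h0] at h1
    simp at h1
  set U : Matrix (Fin (m + t)) (Fin (m + t)) ℝ :=
    (hPSD.1.eigenvectorUnitary : Matrix (Fin (m + t)) (Fin (m + t)) ℝ) with hU_def
  set R : Matrix (Fin (m + t)) (Fin (m + t)) ℝ :=
    U * diagonal ((RCLike.ofReal : ℝ → ℝ) ∘ (√·) ∘ hPSD.1.eigenvalues) * star U with hR_def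
  have hRR : R * R = blockCov Sxx Sxv Svv := by
    have hUU : star U * U = 1 := Unitary.star_mul_self_of_mem hPSD.1.eigenvectorUnitary.2
    calc R * R = U * (diagonal ((RCLike.ofReal : ℝ → ℝ) ∘ (√·) ∘ hPSD.1.eigenvalues) *
          (star U * U) * diagonal ((RCLike.ofReal : ℝ → ℝ) ∘ (√·) ∘ hPSD.1.eigenvalues)) *
          star U := by simp only [hR_def, Matrix.mul_assoc]
      _ = U * diagonal ((RCLike.ofReal : ℝ → ℝ) ∘ hPSD.1.eigenvalues) * star U := by
          rw [hUU, Matrix.mul_one, diagonal_mul_diagonal]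
          congr 3
          funext k
          simp [Real.mul_self_sqrt (hPSD.eigenvalues_nonneg k)]
      _ = blockCov Sxx Sxv Svv := by
          conv_rhs => rw [hPSD.1.spectral_theorem]
          rw [Unitary.conjStarAlgAut_apply]
  have hRsym : Rᵀ = R := by
    rw [hR_def, Matrix.star_eq_conjTranspose, conjTranspose_eq_transpose_of_trivial,
      Matrix.transpose_mul, Matrix.transpose_mul, transpose_transpose, diagonal_transpose]
    simp only [Matrix.mul_assoc]
  have hμeq : μ = (stdGaussianPi (m + t)).map (R.mulVec) := by
    rw [hjoint, _root_.multivariateGaussian, dif_pos hPSD]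
    congr 1
    funext x
    simp [hR_def, hU_def]
  -- the coefficient vectors
  set c₁ : Fin m → ℝ := Pi.single i 1 - Pi.single j 1 with hc₁
  set c₂ : Fin t → ℝ := -(Svv⁻¹ *ᵥ (Sxvᵀ *ᵥ c₁)) with hc₂
  set c : Fin (m + t) → ℝ := Sum.elim c₁ c₂ ∘ finSumFinEquiv.symm with hc
  have hdet : IsUnit Svv.det := isUnit_iff_ne_zero.mpr (ne_of_gt hvv.det_pos)
  have hSvv_symm : Svvᵀ = Svv := by
    have h1 : Svvᴴ = Svv := hvv.1
    rwa [conjTranspose_eq_transpose_of_trivial] at h1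
  have hSvvinv_symm : (Svv⁻¹)ᵀ = Svv⁻¹ := by
    rw [transpose_nonsing_inv, hSvv_symm]
  -- the block computation
  have hSigc : (blockCov Sxx Sxv Svv) *ᵥ c =
      Sum.elim (G *ᵥ c₁) 0 ∘ ⇑finSumFinEquiv.symm := by
    have h1 : c ∘ ⇑finSumFinEquiv = Sum.elim c₁ c₂ := by
      funext p
      simp [hc]
    rw [blockCov, Matrix.reindex_apply, Matrix.submatrix_mulVec_equiv _ c _ finSumFinEquiv.symm,
      Equiv.symm_symm, h1, fromBlocks_mulVec]
    have hx : Sxx *ᵥ (Sum.elim c₁ c₂ ∘ Sum.inl) + Sxv *ᵥ (Sum.elim c₁ c₂ ∘ Sum.inr)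
        = G *ᵥ c₁ := by
      have : (Sum.elim c₁ c₂ ∘ Sum.inl) = c₁ := rfl
      have h2 : (Sum.elim c₁ c₂ ∘ Sum.inr) = c₂ := rfl
      rw [this, h2, hc₂, mulVec_neg, mulVec_mulVec, mulVec_mulVec, hG_def, sub_mulVec,
        Matrix.mul_assoc]
      ring_nf
    have hv : Sxvᵀ *ᵥ (Sum.elim c₁ c₂ ∘ Sum.inl) + Svv *ᵥ (Sum.elim c₁ c₂ ∘ Sum.inr)
        = 0 := by
      have : (Sum.elim c₁ c₂ ∘ Sum.inl) = c₁ := rfl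
      have h2 : (Sum.elim c₁ c₂ ∘ Sum.inr) = c₂ := rfl
      rw [this, h2, hc₂, mulVec_neg, mulVec_mulVec, Matrix.mul_nonsing_inv _ hdet, one_mulVec]
      simp
    rw [hx, hv]
  -- the vector u and its properties
  set u : Fin (m + t) → ℝ := R *ᵥ c with hu_def
  have hcu : ∀ x, c ⬝ᵥ (R *ᵥ x) = u ⬝ᵥ x := by
    intro x
    rw [dotProduct_mulVec, ← mulVec_transpose, hRsym]
  have hRu : R *ᵥ u = Sum.elim (G *ᵥ c₁) 0 ∘ ⇑finSumFinEquiv.symm := by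
    rw [hu_def, mulVec_mulVec, hRR, hSigc]
  have hdotSum : ∀ (w₁ z₁ : Fin m → ℝ) (w₂ z₂ : Fin t → ℝ),
      (Sum.elim w₁ w₂ ∘ ⇑finSumFinEquiv.symm) ⬝ᵥ (Sum.elim z₁ z₂ ∘ ⇑finSumFinEquiv.symm)
        = w₁ ⬝ᵥ z₁ + w₂ ⬝ᵥ z₂ := by
    intro w₁ z₁ w₂ z₂
    simp only [dotProduct, Function.comp_apply]
    rw [Equiv.sum_comp finSumFinEquiv.symm
      (fun p => Sum.elim w₁ w₂ p * Sum.elim z₁ z₂ p), Fintype.sum_sum_type]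
    simp
  -- symmetry facts
  have hsymSig : ∀ a b, blockCov Sxx Sxv Svv a b = blockCov Sxx Sxv Svv b a := by
    intro a b
    have h1 : (blockCov Sxx Sxv Svv)ᴴ = blockCov Sxx Sxv Svv := hPSD.1
    have h2 := congrFun (congrFun h1 b) a
    rwa [Matrix.conjTranspose_apply, star_trivial] at h2
  have hSxx_entry : ∀ a b : Fin m, Sxx a b = Sxx b a := by
    intro a b
    have h2 := hsymSig (Fin.castAdd t a) (Fin.castAdd t b)
    simpa [blockCov, Matrix.reindex_apply, Matrix.submatrix_apply,
      finSumFinEquiv_symm_apply_castAdd, Matrix.fromBlocks_apply₁₁] using h2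
  have hB : (Sxv * Svv⁻¹ * Sxvᵀ)ᵀ = Sxv * Svv⁻¹ * Sxvᵀ := by
    rw [Matrix.transpose_mul, Matrix.transpose_mul, transpose_transpose, hSvvinv_symm,
      ← Matrix.mul_assoc]
  have hGji : G j i = G i j := by
    rw [hG_def]
    simp only [Matrix.sub_apply]
    rw [hSxx_entry j i]
    congr 1
    have h2 := congrFun (congrFun hB i) j
    rwa [Matrix.transpose_apply] at h2
  have hsingle : ∀ w : Fin m → ℝ, c₁ ⬝ᵥ w = w i - w j := by
    intro w
    rw [hc₁, sub_dotProduct, single_dotProduct, single_dotProduct, one_mul, one_mul]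
  have hGc : G *ᵥ c₁ = fun k => G k i - G k j := by
    rw [hc₁, mulVec_sub, mulVec_single, mulVec_single]
    funext k
    simp
  have huusv : u ⬝ᵥ u = sv := by
    have h1 : u ⬝ᵥ u = c ⬝ᵥ (R *ᵥ u) := (hcu u).symm
    rw [h1, hRu, hc, hdotSum, dotProduct_zero, add_zero, hsingle, hGc]
    show (G i i - G i j) - (G j i - G j j) = G i i + G j j - 2 * G i j
    rw [hGji]
    ring
  have hupos : 0 < u ⬝ᵥ u := huusv ▸ hs
  -- the projection matrix and N
  set Mmat : Matrix (Fin t) (Fin (m + t)) ℝ :=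
    (fun k l => if l = Fin.natAdd m k then 1 else 0) with hMmat
  have hMapp : ∀ z : Fin (m + t) → ℝ, Mmat *ᵥ z = fun k => z (Fin.natAdd m k) := by
    intro z
    funext k
    rw [hMmat]
    simp only [Matrix.mulVec, dotProduct]
    simp only [ite_mul, one_mul, zero_mul]
    rw [Finset.sum_ite_eq' Finset.univ (Fin.natAdd m k) z]
    simp
  set N : Matrix (Fin t) (Fin (m + t)) ℝ := Mmat * R with hN_def
  have hNu : N *ᵥ u = 0 := by
    rw [hN_def, ← mulVec_mulVec, hRu, hMapp]
    funext k
    simp [finSumFinEquiv_symm_apply_natAdd]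
  -- the pair map F
  set F : (Fin (m + t) → ℝ) → ℝ × (Fin t → ℝ) := fun z => (c ⬝ᵥ z, Mmat *ᵥ z) with hF_def
  have hFm : Measurable F := (measurable_dotProduct' c).prodMk (measurable_mulVec' Mmat)
  have hFR : F ∘ R.mulVec = fun x => (u ⬝ᵥ x, N *ᵥ x) := by
    funext x
    refine Prod.ext (hcu x) ?_
    show Mmat *ᵥ (R *ᵥ x) = N *ᵥ x
    rw [mulVec_mulVec]
  set γ : Measure ℝ := gaussianReal 0 (⟨u ⬝ᵥ u, hupos.le⟩ : NNReal) with hγ_def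
  haveI : IsProbabilityMeasure γ := by rw [hγ_def]; exact instIsProbabilityMeasureGaussianReal _ _
  have hkey : μ.map F = γ.prod ((stdGaussianPi (m + t)).map (N.mulVec)) := by
    rw [hμeq, Measure.map_map hFm (measurable_mulVec' R), hFR]
    exact stdGaussianPi_map_pair u hupos N hNu
  set κ : Measure (Fin t → ℝ) := P.map V with hκ_def
  have hκprob : IsProbabilityMeasure κ := Measure.isProbabilityMeasure_map hV.aemeasurable
  have hMappend : ∀ ω, Mmat *ᵥ (Fin.append (X ω) (V ω)) = V ω := by
    intro ω
    rw [hMapp]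
    funext k
    rw [Fin.append_right]
  have hκeq : (stdGaussianPi (m + t)).map (N.mulVec) = κ := by
    have h1 : μ.map (fun z => Mmat *ᵥ z) = κ := by
      rw [hμ_def, Measure.map_map (measurable_mulVec' Mmat) habm]
      rw [hκ_def]
      congr 1
      funext ω
      exact hMappend ω
    have h2 : μ.map (fun z => Mmat *ᵥ z) = (stdGaussianPi (m + t)).map (N.mulVec) := by
      rw [hμeq, Measure.map_map (measurable_mulVec' Mmat) (measurable_mulVec' R)]
      congr 1
      funext x
      show Mmat *ᵥ (R *ᵥ x) = N *ᵥ x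
      rw [mulVec_mulVec]
    rw [← h2, h1]
  rw [hκeq] at hkey
  -- the function h and the event E
  set hfun : (Fin t → ℝ) → ℝ := fun v => (A *ᵥ v) j - (A *ᵥ v) i with hhfun
  have hhm : Measurable hfun :=
    ((measurable_pi_apply j).comp (measurable_mulVec' A)).sub
      ((measurable_pi_apply i).comp (measurable_mulVec' A))
  have hc₂v : ∀ v : Fin t → ℝ, c₂ ⬝ᵥ v = hfun v := by
    intro v
    have h1 : c₁ ⬝ᵥ (A *ᵥ v) = (Svv⁻¹ *ᵥ (Sxvᵀ *ᵥ c₁)) ⬝ᵥ v := by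
      rw [dotProduct_mulVec, ← mulVec_transpose, hA_def, Matrix.transpose_mul, hSvvinv_symm,
        ← mulVec_mulVec]
    rw [hc₂, neg_dotProduct, ← h1, hsingle (A *ᵥ v), hhfun]
    ring
  have happend : ∀ (x : Fin m → ℝ) (v : Fin t → ℝ),
      Fin.append x v = Sum.elim x v ∘ ⇑finSumFinEquiv.symm := by
    intro x v
    funext l
    refine Fin.addCases (fun k => ?_) (fun k => ?_) l
    · simp [Fin.append_left, finSumFinEquiv_symm_apply_castAdd]
    · simp [Fin.append_right, finSumFinEquiv_symm_apply_natAdd]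
  have hdotapp : ∀ ω, c ⬝ᵥ Fin.append (X ω) (V ω) = (X ω i - X ω j) + hfun (V ω) := by
    intro ω
    rw [happend, hc, hdotSum, hsingle, hc₂v]
  set E : Set (ℝ × (Fin t → ℝ)) := {p | p.1 ≤ hfun p.2 ∧ p.2 ∈ S} with hE
  have hEm : MeasurableSet E :=
    (measurableSet_le measurable_fst (hhm.comp measurable_snd)).inter (measurable_snd hS)
  have hpre : (fun ω => F (Fin.append (X ω) (V ω))) ⁻¹' E
      = (V ⁻¹' S) ∩ {ω | X ω i ≤ X ω j} := by
    ext ω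
    simp only [Set.mem_preimage, hE, Set.mem_setOf_eq, hF_def, Set.mem_inter_iff]
    rw [hMappend ω, hdotapp ω]
    constructor
    · rintro ⟨h1, h2⟩
      exact ⟨h2, by linarith⟩
    · rintro ⟨h2, h1⟩
      exact ⟨by linarith, h2⟩
  -- gaussian scaling
  have hγ1 : γ = (gaussianReal 0 1).map (fun a => s * a) := by
    rw [gaussianReal_map_const_mul s, mul_zero, hγ_def]
    congr 1
    ext
    simp [← hs2, huusv]
    rfl
  have hγIic : ∀ x : ℝ, γ (Set.Iic x) = gaussianReal 0 1 (Set.Iic (x / s)) := by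
    intro x
    rw [hγ1, Measure.map_apply (measurable_const_mul s) measurableSet_Iic]
    congr 1
    ext a
    simp only [Set.mem_preimage, Set.mem_Iic]
    rw [le_div_iff₀ hspos, mul_comm]
  -- events and measures
  have hbig : Measurable (fun ω => F (Fin.append (X ω) (V ω))) := hFm.comp habm
  have hPq : P ((V ⁻¹' S) ∩ {ω | X ω i ≤ X ω j}) = (μ.map F) E := by
    rw [hμ_def, Measure.map_map hFm habm]
    rw [show (F ∘ fun ω => Fin.append (X ω) (V ω)) = fun ω => F (Fin.append (X ω) (V ω))
      from rfl]
    rw [Measure.map_apply hbig hEm, hpre]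
  have hρE : (μ.map F) E = ∫⁻ v in S, γ (Set.Iic (hfun v)) ∂κ := by
    rw [hkey, Measure.prod_apply_symm hEm]
    have hslice : ∀ v, γ ((fun w => (w, v)) ⁻¹' E)
        = S.indicator (fun v => γ (Set.Iic (hfun v))) v := by
      intro v
      by_cases hv : v ∈ S
      · rw [Set.indicator_of_mem hv]
        congr 1
        ext w
        simp [hE, hv]
      · rw [Set.indicator_of_notMem hv]
        have hemp : (fun w => (w, v)) ⁻¹' E = ∅ := by
          ext w
          simp [hE, hv]
        rw [hemp]
        exact measure_empty
    rw [lintegral_congr hslice, lintegral_indicator hS]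
  have hγmono : Measurable (fun x : ℝ => γ (Set.Iic x)) := by
    refine Monotone.measurable fun a b hab => ?_
    exact measure_mono (Set.Iic_subset_Iic.2 hab)
  have hfin : ((μ.map F) E).toReal = ∫ v in S, stdNormalCDF (hfun v / s) ∂κ := by
    rw [hρE]
    have hint : ∫ v in S, stdNormalCDF (hfun v / s) ∂κ
        = ∫ v in S, (γ (Set.Iic (hfun v))).toReal ∂κ := by
      refine integral_congr_ae (Filter.Eventually.of_forall fun v => ?_)
      unfold stdNormalCDF
      simp only [hγIic]
    rw [hint, integral_toReal (f := fun v => γ (Set.Iic (hfun v)))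
      ((hγmono.comp hhm).aemeasurable)
      (Filter.Eventually.of_forall fun v => measure_lt_top γ _)]
  have hgm : Measurable (fun v => stdNormalCDF (hfun v / s)) :=
    measurable_stdNormalCDF.comp (hhm.div_const s)
  have hRHS : ∫ ω, stdNormalCDF (hfun (V ω) / s) ∂(P[|V ⁻¹' S])
      = (P (V ⁻¹' S))⁻¹.toReal * ∫ v in S, stdNormalCDF (hfun v / s) ∂κ := by
    rw [ProbabilityTheory.cond, integral_smul_measure, smul_eq_mul]
    congr 1
    rw [hκ_def, setIntegral_map hS hgm.aestronglyMeasurable hV.aemeasurable]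
  -- final assembly
  show (P[|V ⁻¹' S] {ω | X ω i ≤ X ω j}).toReal
      = ∫ ω, stdNormalCDF (hfun (V ω) / s) ∂(P[|V ⁻¹' S])
  rw [ProbabilityTheory.cond_apply (hV hS), hPq, ENNReal.toReal_mul, hfin, hRHS]
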